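/- (Sequential law of total conditional variance) Let (Ω, ℱ, P) be a probability space, let 𝒢₀ ⊆ 𝒢₁ ⊆ … ⊆ 𝒢_N ⊆ ℱ be an increasing sequence of sub-σ-algebras, and let Y be a square-integrable random variable. Then almost surely Var(Y | 𝒢₀) = E[Var(Y | 𝒢_N) | 𝒢₀] + Σ_{t=1}^N E[Var(E[Y | 𝒢_t] | 𝒢_{t−1}) | 𝒢₀]. -/

import Mathlib

open MeasureTheory

lemma memℒp_two_condexp_aux {Ω : Type*} {m m0 : MeasurableSpace Ω} (hm : m ≤ m0)
    (μ : Measure Ω) [IsFiniteMeasure μ] {f : Ω → ℝ} (hf : MemLp f 2 μ) :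
    MemLp (μ[f|m]) 2 μ := by
  have h : (condExpL2 ℝ ℝ hm (hf.toLp f) : Ω → ℝ) =ᵐ[μ] μ[f|m] := by
    refine ae_eq_condExp_of_forall_setIntegral_eq hm (hf.integrable one_le_two)
      (fun s hs hμs => integrableOn_condExpL2_of_measure_ne_top hm hμs.ne _)
      (fun s hs hμs => ?_) (aestronglyMeasurable_condExpL2 hm _)
    rw [integral_condExpL2_eq hm (hf.toLp f) hs hμs.ne]
    exact setIntegral_congr_ae (hm s hs) ((hf.coeFn_toLp).mono fun x hx _ => hx)
  exact (Lp.memLp _).ae_eq h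

theorem sequential_law_of_total_conditional_variance
    {Ω : Type*} {m : MeasurableSpace Ω} (μ : Measure Ω) [IsProbabilityMeasure μ]
    (N : ℕ) (G : ℕ → MeasurableSpace Ω) (hmono : ∀ i j, i ≤ j → G i ≤ G j)
    (hle : ∀ i, G i ≤ m) (Y : Ω → ℝ) (hY : MemLp Y 2 μ) :
    ∀ᵐ ω ∂μ,
      (μ[fun ω' => (Y ω')^2 | G 0]) ω - ((μ[Y | G 0]) ω)^2
        = (μ[fun ω' => (μ[fun ω'' => (Y ω'')^2 | G N]) ω' - ((μ[Y | G N]) ω')^2 | G 0]) ω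
          + ∑ t ∈ Finset.range N,
            (μ[fun ω' => (μ[fun ω'' => ((μ[Y | G (t+1)]) ω'')^2 | G t]) ω'
                - ((μ[μ[Y | G (t+1)] | G t]) ω')^2 | G 0]) ω := by
  have hQ : Integrable (fun ω => (Y ω)^2) μ := hY.integrable_sq
  -- conditional expectations of Y are in L²
  have hf2 : ∀ t, MemLp (μ[Y|G t]) 2 μ := fun t => memℒp_two_condexp_aux (hle t) μ hY
  have hfsq : ∀ t, Integrable (fun ω => ((μ[Y|G t]) ω)^2) μ := fun t => (hf2 t).integrable_sq
  -- the conditional variance processes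
  set v : ℕ → Ω → ℝ := fun s => fun ω' =>
    (μ[fun ω'' => (Y ω'')^2 | G s]) ω' - ((μ[Y | G s]) ω')^2 with hv
  set w : ℕ → Ω → ℝ := fun t => fun ω' =>
    (μ[fun ω'' => ((μ[Y | G (t+1)]) ω'')^2 | G t]) ω' - ((μ[μ[Y | G (t+1)] | G t]) ω')^2 with hw
  have hvint : ∀ s, Integrable (v s) μ := fun s => integrable_condExp.sub (hfsq s)
  have hwint : ∀ t, Integrable (w t) μ := fun t =>
    integrable_condExp.sub (memℒp_two_condexp_aux (hle t) μ (hf2 (t+1))).integrable_sq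
  -- one-step law of total conditional variance
  have key : ∀ t, v t =ᵐ[μ] μ[v (t+1)|G t] + w t := by
    intro t
    have h1 : μ[fun ω'' => (Y ω'')^2 | G t]
        =ᵐ[μ] μ[μ[fun ω'' => (Y ω'')^2 | G (t+1)] | G t] :=
      (condExp_condExp_of_le (hmono t (t+1) (Nat.le_succ t)) (hle (t+1))).symm
    have h2 : μ[Y | G t] =ᵐ[μ] μ[μ[Y | G (t+1)] | G t] :=
      (condExp_condExp_of_le (hmono t (t+1) (Nat.le_succ t)) (hle (t+1))).symm
    have h3 : μ[v (t+1)|G t]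
        =ᵐ[μ] μ[μ[fun ω'' => (Y ω'')^2 | G (t+1)] | G t]
          - μ[fun ω'' => ((μ[Y | G (t+1)]) ω'')^2 | G t] :=
      condExp_sub integrable_condExp (hfsq (t+1)) _
    filter_upwards [h1, h2, h3] with ω e1 e2 e3
    simp only [hv, hw, Pi.add_apply, Pi.sub_apply] at *
    rw [e1, e2, e3]
    ring
  -- main induction
  induction N with
  | zero =>
    simp only [Finset.range_zero, Finset.sum_empty, add_zero]
    have hsm : StronglyMeasurable[G 0] (v 0) :=
      stronglyMeasurable_condExp.sub (stronglyMeasurable_condExp.pow 2)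
    have : μ[v 0 | G 0] = v 0 := condExp_of_stronglyMeasurable (hle 0) hsm (hvint 0)
    rw [this]
    exact Filter.Eventually.of_forall fun ω => rfl
  | succ n ih =>
    have step : μ[v n | G 0] =ᵐ[μ] μ[v (n+1) | G 0] + μ[w n | G 0] := by
      calc μ[v n | G 0] =ᵐ[μ] μ[μ[v (n+1)|G n] + w n | G 0] := condExp_congr_ae (key n)
        _ =ᵐ[μ] μ[μ[v (n+1)|G n] | G 0] + μ[w n | G 0] :=
            condExp_add integrable_condExp (hwint n) _
        _ =ᵐ[μ] μ[v (n+1) | G 0] + μ[w n | G 0] := by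
            filter_upwards [condExp_condExp_of_le (f := v (n+1)) (μ := μ) (hmono 0 n (Nat.zero_le n)) (hle n)] with ω hω
            simp only [Pi.add_apply, hω]
    filter_upwards [ih, step] with ω e1 e2
    rw [Finset.sum_range_succ, e1]
    simp only [Pi.add_apply] at e2
    rw [e2]
    ring
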